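/- Let a, b ∈ ℝ with 0 < b − a ≤ π, let m ≥ 1, and for k = 1, …, m let z_k = r_k·exp(i·θ_k) be complex numbers with r_k > 0 and θ_k ∈ (a, b). Then the sum Σ_{k=1}^{m} z_k is nonzero and can be written as R·exp(i·φ) with R > 0 and min_k θ_k ≤ φ ≤ max_k θ_k; in particular φ ∈ (a, b). -/

import Mathlib

open Real

lemma my_re (r x : ℝ) : ((r:ℂ) * Complex.exp (Complex.I * x)).re = r * Real.cos x := by
  rw [mul_comm Complex.I]
  simp [Complex.exp_mul_I, Complex.mul_re, Complex.cos_ofReal_re, Complex.sin_ofReal_im]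

lemma my_im (r x : ℝ) : ((r:ℂ) * Complex.exp (Complex.I * x)).im = r * Real.sin x := by
  rw [mul_comm Complex.I]
  simp [Complex.exp_mul_I, Complex.mul_im, Complex.cos_ofReal_im, Complex.sin_ofReal_re]

lemma my_rot (r x t : ℝ) :
    Complex.exp (-(Complex.I * t)) * ((r:ℂ) * Complex.exp (Complex.I * x))
      = (r:ℂ) * Complex.exp (Complex.I * ((x - t : ℝ) : ℂ)) := by
  rw [mul_left_comm, ← Complex.exp_add]
  push_cast
  ring_nf

theorem stmt_18 (a b : ℝ) (hab0 : 0 < b - a) (hab1 : b - a ≤ π)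
    (m : ℕ) (hm : 1 ≤ m) (z : Fin m → ℂ) (r θ : Fin m → ℝ)
    (hr : ∀ k, 0 < r k) (hθa : ∀ k, a < θ k) (hθb : ∀ k, θ k < b)
    (hz : ∀ k, z k = (r k : ℂ) * Complex.exp (Complex.I * (θ k : ℂ))) :
    (∑ k, z k) ≠ 0 ∧
      ∃ R φ : ℝ, 0 < R ∧
        Finset.univ.inf' ⟨⟨0, by omega⟩, Finset.mem_univ _⟩ θ ≤ φ ∧
        φ ≤ Finset.univ.sup' ⟨⟨0, by omega⟩, Finset.mem_univ _⟩ θ ∧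
        a < φ ∧ φ < b ∧
        (∑ k, z k) = (R : ℂ) * Complex.exp (Complex.I * (φ : ℂ)) := by
  have hne : (Finset.univ : Finset (Fin m)).Nonempty := ⟨⟨0, by omega⟩, Finset.mem_univ _⟩
  set θm := Finset.univ.inf' hne θ with hθm
  set θM := Finset.univ.sup' hne θ with hθM
  obtain ⟨km, -, hkm⟩ := Finset.exists_mem_eq_inf' hne θ
  obtain ⟨kM, -, hkM⟩ := Finset.exists_mem_eq_sup' hne θ
  have hθmle : ∀ k, θm ≤ θ k := fun k => Finset.inf'_le _ (Finset.mem_univ k)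
  have hθMle : ∀ k, θ k ≤ θM := fun k => Finset.le_sup' _ (Finset.mem_univ k)
  have ham : a < θm := by rw [hθm, hkm]; exact hθa km
  have hMb : θM < b := by rw [hθM, hkM]; exact hθb kM
  have hmM : θm ≤ θM := le_trans (hθmle km) (hθMle km)
  have hw : θM - θm < π := by linarith
  set c := (θm + θM) / 2 with hc
  set S := ∑ k, z k with hS
  -- rotated sum formula
  have hrot : ∀ t : ℝ, Complex.exp (-(Complex.I * t)) * S
      = ∑ k, (r k : ℂ) * Complex.exp (Complex.I * ((θ k - t : ℝ) : ℂ)) := by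
    intro t
    rw [hS, Finset.mul_sum]
    refine Finset.sum_congr rfl fun k _ => ?_
    rw [hz k, my_rot]
  have hre : (Complex.exp (-(Complex.I * (c:ℂ))) * S).re = ∑ k, r k * Real.cos (θ k - c) := by
    rw [hrot c, Complex.re_sum]
    exact Finset.sum_congr rfl fun k _ => my_re _ _
  have hrepos : 0 < (Complex.exp (-(Complex.I * (c:ℂ))) * S).re := by
    rw [hre]
    apply Finset.sum_pos _ hne
    intro k _
    apply mul_pos (hr k)
    apply Real.cos_pos_of_mem_Ioo
    rw [Set.mem_Ioo]
    have h1 := hθmle k; have h2 := hθMle k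
    constructor <;> [skip; skip] <;> simp only [hc] <;> linarith
  have hSne : S ≠ 0 := by
    intro h
    rw [h, mul_zero] at hrepos
    simp at hrepos
  set ψ := Complex.arg (Complex.exp (-(Complex.I * (c:ℂ))) * S) with hψdef
  have hψ : |ψ| < π / 2 := Complex.abs_arg_lt_pi_div_two_iff.mpr (Or.inl hrepos)
  rw [abs_lt] at hψ
  set R := ‖S‖ with hR
  have hRpos : 0 < R := norm_pos_iff.mpr hSne
  have habs : ‖Complex.exp (-(Complex.I * (c:ℂ))) * S‖ = R := by
    rw [norm_mul, Complex.norm_exp]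
    simp [hR]
  set φ := c + ψ with hφ
  have hSexp : S = (R : ℂ) * Complex.exp (Complex.I * (φ : ℂ)) := by
    have h1 : ((‖Complex.exp (-(Complex.I * (c:ℂ))) * S‖ : ℝ) : ℂ) *
        Complex.exp (ψ * Complex.I) = Complex.exp (-(Complex.I * (c:ℂ))) * S :=
      Complex.norm_mul_exp_arg_mul_I _
    rw [habs] at h1
    have h2 : S = Complex.exp (Complex.I * (c:ℂ)) * ((R:ℂ) * Complex.exp (ψ * Complex.I)) := by
      rw [h1, ← mul_assoc, ← Complex.exp_add]
      simp
    have harg : Complex.I * (c:ℂ) + (ψ:ℂ) * Complex.I = Complex.I * ((φ:ℝ):ℂ) := by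
      rw [hφ]
      push_cast
      ring
    rw [h2, mul_left_comm, ← Complex.exp_add, harg]
  -- imaginary part bounds
  have himform : ∀ t : ℝ, (Complex.exp (-(Complex.I * (t:ℂ))) * S).im = R * Real.sin (φ - t) := by
    intro t
    rw [hSexp, my_rot, my_im]
  have hsinm : 0 ≤ Real.sin (φ - θm) := by
    have h1 : 0 ≤ (Complex.exp (-(Complex.I * (θm:ℂ))) * S).im := by
      rw [hrot θm, Complex.im_sum]
      apply Finset.sum_nonneg
      intro k _
      rw [my_im]
      apply mul_nonneg (hr k).le
      apply Real.sin_nonneg_of_nonneg_of_le_pi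
      · linarith [hθmle k]
      · linarith [hθMle k]
    rw [himform θm] at h1
    nlinarith
  have hsinM : Real.sin (φ - θM) ≤ 0 := by
    have h1 : (Complex.exp (-(Complex.I * (θM:ℂ))) * S).im ≤ 0 := by
      rw [hrot θM, Complex.im_sum]
      apply Finset.sum_nonpos
      intro k _
      rw [my_im]
      apply mul_nonpos_of_nonneg_of_nonpos (hr k).le
      apply Real.sin_nonpos_of_nonpos_of_neg_pi_le
      · linarith [hθMle k]
      · linarith [hθmle k]
    rw [himform θM] at h1
    nlinarith
  have hφm : θm ≤ φ := by
    by_contra h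
    push_neg at h
    have : Real.sin (φ - θm) < 0 := by
      apply Real.sin_neg_of_neg_of_neg_pi_lt
      · linarith
      · simp only [hφ, hc]; linarith
    linarith
  have hφM : φ ≤ θM := by
    by_contra h
    push_neg at h
    have : 0 < Real.sin (φ - θM) := by
      apply Real.sin_pos_of_pos_of_lt_pi
      · linarith
      · simp only [hφ, hc]; linarith
    linarith
  exact ⟨hSne, R, φ, hRpos, hφm, hφM, lt_of_lt_of_le ham hφm, lt_of_le_of_lt hφM hMb, hSexp⟩
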